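/- For the Dirac symbol D(x,ξ) = α·(cξ − eA(x)) + β mc² + e v(x), where v(x) = diag(v₊(x)I₂, v₋(x)I₂) and |e(v₊(x) − v₋(x))| < 2mc², the matrix D(x,ξ) has exactly the two eigenvalues H±(x,ξ) = ±√(|cξ − eA(x)|² + (mc² + (e/2)(v₊ − v₋)(x))²) + (e/2)(v₊ + v₋)(x), each of multiplicity two. -/

import Mathlib

open Matrix Complex Polynomial

noncomputable section

def pauli : Fin 3 → Matrix (Fin 2) (Fin 2) ℂ
  | 0 => !![0, 1; 1, 0]
  | 1 => !![0, -Complex.I; Complex.I, 0]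
  | 2 => !![1, 0; 0, -1]

abbrev Dir4 := Matrix (Fin 2 ⊕ Fin 2) (Fin 2 ⊕ Fin 2) ℂ

def diracAlpha (i : Fin 3) : Dir4 := Matrix.fromBlocks 0 (pauli i) (pauli i) 0

def diracBeta : Dir4 := Matrix.fromBlocks 1 0 0 (-1)


def e4 : (Fin 2 ⊕ Fin 2) ≃ Fin 4 where
  toFun := Sum.elim ![0, 1] ![2, 3]
  invFun := ![Sum.inl 0, Sum.inl 1, Sum.inr 0, Sum.inr 1]
  left_inv := by decide
  right_inv := by decide

lemma key (w w' x2 p q : ℂ) :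
    (!![p,0,x2,w; 0,p,w',-x2; x2,w,q,0; w',-x2,0,q] : Matrix (Fin 4) (Fin 4) ℂ).charpoly
      = ((X - C p)*(X - C q) - C (x2^2 + w*w'))^2 := by
  rw [Matrix.charpoly]
  simp [Matrix.det_succ_row_zero, Fin.sum_univ_succ, charmatrix_apply, Matrix.diagonal]
  simp (config := {decide := true}) [Fin.succAbove]
  ring

set_option maxHeartbeats 1000000 in
/-- For the Dirac symbol `D = α·a + βmc² + e·diag(v₊I₂, v₋I₂)` (with `a = cξ − eA(x)`
fixed), under `|e(v₊ − v₋)| < 2mc²`, `D` has exactly the two eigenvalues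
`H± = ±√(|a|² + (mc² + (e/2)(v₊ − v₋))²) + (e/2)(v₊ + v₋)`, each of multiplicity two,
i.e. its characteristic polynomial is `((X − H⁺)(X − H⁻))²` with `H⁺ ≠ H⁻`. -/
theorem dirac_electromagnetic_eigenvalues (a : Fin 3 → ℝ) (vp vm m c e : ℝ)
    (hm : 0 < m) (hc : 0 < c) (he : e < 0) (hv : |e * (vp - vm)| < 2 * m * c ^ 2) :
    let D : Dir4 := (∑ i, (a i : ℂ) • diracAlpha i) + ((m * c ^ 2 : ℝ) : ℂ) • diracBeta +
      ((e : ℝ) : ℂ) • Matrix.fromBlocks (((vp : ℝ) : ℂ) • 1) 0 0 (((vm : ℝ) : ℂ) • 1)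
    let Hp : ℝ := Real.sqrt ((∑ i, a i ^ 2) + (m * c ^ 2 + e / 2 * (vp - vm)) ^ 2)
      + e / 2 * (vp + vm)
    let Hm : ℝ := -Real.sqrt ((∑ i, a i ^ 2) + (m * c ^ 2 + e / 2 * (vp - vm)) ^ 2)
      + e / 2 * (vp + vm)
    Hp ≠ Hm ∧
    D.charpoly = ((X - C ((Hp : ℝ) : ℂ)) * (X - C ((Hm : ℝ) : ℂ))) ^ 2 := by
  intro D Hp Hm
  have harg : 0 < (∑ i, a i ^ 2) + (m * c ^ 2 + e / 2 * (vp - vm)) ^ 2 := by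
    have h1 : 0 < m * c ^ 2 + e / 2 * (vp - vm) := by
      have := abs_lt.mp hv
      nlinarith [this.1, this.2]
    have h2 : 0 ≤ ∑ i, a i ^ 2 := Finset.sum_nonneg fun i _ => sq_nonneg _
    nlinarith
  set s : ℝ := Real.sqrt ((∑ i, a i ^ 2) + (m * c ^ 2 + e / 2 * (vp - vm)) ^ 2) with hs_def
  have hs : s ^ 2 = (∑ i, a i ^ 2) + (m * c ^ 2 + e / 2 * (vp - vm)) ^ 2 :=
    Real.sq_sqrt harg.le
  have hspos : 0 < s := Real.sqrt_pos.mpr harg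
  refine ⟨by unfold Hp Hm; intro h; nlinarith, ?_⟩
  -- identify D with an explicit 4×4 matrix
  have h4 : Matrix.reindex e4 e4 D =
      !![((m*c^2 + e*vp : ℝ) : ℂ), 0, (a 2 : ℂ), (a 0 : ℂ) - Complex.I * (a 1 : ℂ);
         0, ((m*c^2 + e*vp : ℝ) : ℂ), (a 0 : ℂ) + Complex.I * (a 1 : ℂ), -(a 2 : ℂ);
         (a 2 : ℂ), (a 0 : ℂ) - Complex.I * (a 1 : ℂ), ((e*vm - m*c^2 : ℝ) : ℂ), 0;
         (a 0 : ℂ) + Complex.I * (a 1 : ℂ), -(a 2 : ℂ), 0, ((e*vm - m*c^2 : ℝ) : ℂ)] := by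
    ext i j
    fin_cases i <;> fin_cases j <;>
      simp [D, e4, diracAlpha, diracBeta, pauli, Matrix.fromBlocks, Fin.sum_univ_three,
        Matrix.sum_apply] <;> push_cast <;> ring
  have hchar : D.charpoly =
      ((X - C ((m*c^2 + e*vp : ℝ) : ℂ)) * (X - C ((e*vm - m*c^2 : ℝ) : ℂ))
        - C ((a 2 : ℂ)^2 + ((a 0 : ℂ) - Complex.I * (a 1 : ℂ)) * ((a 0 : ℂ) + Complex.I * (a 1 : ℂ))))^2 := by
    rw [← Matrix.charpoly_reindex e4, h4, key]
  rw [hchar]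
  have hww : ((a 0 : ℂ) - Complex.I * (a 1 : ℂ)) * ((a 0 : ℂ) + Complex.I * (a 1 : ℂ))
      = (a 0 : ℂ)^2 + (a 1 : ℂ)^2 := by
    linear_combination (-(a 1 : ℂ)^2) * Complex.I_sq
  rw [hww]
  have e1 : ((m*c^2 + e*vp : ℝ) : ℂ) + ((e*vm - m*c^2 : ℝ) : ℂ) = ((Hp : ℝ) : ℂ) + ((Hm : ℝ) : ℂ) := by
    have hr1 : (m*c^2 + e*vp) + (e*vm - m*c^2) = Hp + Hm := by unfold Hp Hm; ring
    exact_mod_cast hr1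
  have e2 : ((m*c^2 + e*vp : ℝ) : ℂ) * ((e*vm - m*c^2 : ℝ) : ℂ)
      - ((a 2 : ℂ)^2 + ((a 0 : ℂ)^2 + (a 1 : ℂ)^2)) = ((Hp : ℝ) : ℂ) * ((Hm : ℝ) : ℂ) := by
    have hr : (m*c^2 + e*vp) * (e*vm - m*c^2) - (a 2^2 + (a 0^2 + a 1^2)) = Hp * Hm := by
      unfold Hp Hm
      rw [Fin.sum_univ_three] at hs
      linear_combination hs
    exact_mod_cast hr
  have : (X - C ((m*c^2 + e*vp : ℝ) : ℂ)) * (X - C ((e*vm - m*c^2 : ℝ) : ℂ))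
        - C ((a 2 : ℂ)^2 + ((a 0 : ℂ)^2 + (a 1 : ℂ)^2))
      = (X - C ((Hp : ℝ) : ℂ)) * (X - C ((Hm : ℝ) : ℂ)) := by
    have c1 : C (((m*c^2 + e*vp : ℝ) : ℂ)) + C (((e*vm - m*c^2 : ℝ) : ℂ))
        = C ((Hp : ℝ) : ℂ) + C ((Hm : ℝ) : ℂ) := by rw [← C_add, ← C_add, e1]
    have c2 : C (((m*c^2 + e*vp : ℝ) : ℂ)) * C (((e*vm - m*c^2 : ℝ) : ℂ))
        - C ((a 2 : ℂ)^2 + ((a 0 : ℂ)^2 + (a 1 : ℂ)^2))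
        = C ((Hp : ℝ) : ℂ) * C ((Hm : ℝ) : ℂ) := by
      rw [← C_mul, ← C_mul, ← C_sub, e2]
    linear_combination c2 - X * c1
  rw [this]
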